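/- Let G be a graph with a rooted tree decomposition (T,β) where the root r has β(r) = ∅ and every non-root node z with parent z' satisfies |β(z) \ β(z')| ≤ 1. For each root-to-leaf path P of T, let G_P be the subgraph of G induced by the union of the bags along P. If v ∈ V(G_P) ∩ V(G_{P'}) for two root-leaf paths P, P', then v ∈ β(z) for some node z on the common initial segment of P and P'. -/

import Mathlib

private lemma meet_lemma {ι : Type} {T : SimpleGraph ι} [DecidableEq ι] (ht : T.IsAcyclic) {r z z' : ι}
    (π : T.Walk z z') : ∀ (a : T.Walk r z) (b : T.Walk r z'), a.IsPath → b.IsPath →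
    ∃ w, w ∈ a.support ∧ w ∈ b.support ∧ w ∈ π.support := by
  induction π with
  | nil =>
    intro a b _ _
    exact ⟨_, a.end_mem_support, b.end_mem_support, SimpleGraph.Walk.start_mem_support _⟩
  | @cons z y z' h π ih =>
    intro a b ha hb
    by_cases hzb : z ∈ b.support
    · exact ⟨z, a.end_mem_support, hzb, SimpleGraph.Walk.start_mem_support _⟩
    by_cases hya : y ∈ a.support
    · obtain ⟨w, hw1, hw2, hw3⟩ := ih (a.takeUntil y hya) b (ha.takeUntil hya) hb
      exact ⟨w, SimpleGraph.Walk.support_takeUntil_subset _ _ hw1, hw2,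
        by simp [SimpleGraph.Walk.support_cons]; right; exact hw3⟩
    · have ha2 : (a.concat h).IsPath := by
        rw [← SimpleGraph.Walk.isPath_reverse_iff, SimpleGraph.Walk.reverse_concat]
        rw [SimpleGraph.Walk.cons_isPath_iff]
        exact ⟨ha.reverse, by simpa using hya⟩
      obtain ⟨w, hw1, hw2, hw3⟩ := ih (a.concat h) b ha2 hb
      rw [SimpleGraph.Walk.support_concat, List.mem_append] at hw1
      rcases hw1 with hw1 | hw1
      · exact ⟨w, hw1, hw2, by simp [SimpleGraph.Walk.support_cons]; right; exact hw3⟩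
      · -- w = y, y ∈ b.support: contradiction via path uniqueness
        simp at hw1
        subst hw1
        have hyb : w ∈ b.support := hw2
        have heq : (⟨a.concat h, ha2⟩ : T.Path r w) = ⟨b.takeUntil w hyb, hb.takeUntil hyb⟩ :=
          ht.path_unique _ _
        have : z ∈ (b.takeUntil w hyb).support := by
          have := congrArg (fun q : T.Path r w => z ∈ q.1.support) heq
          simp only at this
          rw [← this]
          simp [SimpleGraph.Walk.support_concat]
        exact absurd (SimpleGraph.Walk.support_takeUntil_subset _ _ this) hzb

/-- let `(T, bag)` be a tree decomposition of `G`, rooted at `r` with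
`bag r = ∅` and such that each node `z` at distance `dist r z' + 1` from the root along an
edge `z'z` (i.e. `z'` is the parent of `z`) satisfies `|bag z \ bag z'| ≤ 1`.
If `p, p'` are paths of `T` from `r` (to leaves `l, l'`) and a vertex `v` of `G` lies in a
bag of a node of `p` and in a bag of a node of `p'`, then `v` lies in the bag of a node on
the common initial segment of `p` and `p'` (a node belonging to both paths). -/
theorem common_initial_segment {V : Type} [Fintype V] [DecidableEq V] (G : SimpleGraph V)
    {ι : Type} (T : SimpleGraph ι) (bag : ι → Finset V)
    (htree : T.IsTree)
    (hcover : ∀ ⦃u v : V⦄, G.Adj u v → ∃ i, u ∈ bag i ∧ v ∈ bag i)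
    (hne : ∀ v : V, ∃ i, v ∈ bag i)
    (hconn : ∀ v : V, (T.induce {i | v ∈ bag i}).Connected)
    (r : ι) (hroot : bag r = ∅)
    (hparent : ∀ z z' : ι, T.Adj z' z → T.dist r z = T.dist r z' + 1 →
      (bag z \ bag z').card ≤ 1)
    (l l' : ι) (p : T.Walk r l) (p' : T.Walk r l')
    (hp : p.IsPath) (hp' : p'.IsPath)
    (v : V) (z : ι) (hz : z ∈ p.support) (hvz : v ∈ bag z)
    (z' : ι) (hz' : z' ∈ p'.support) (hvz' : v ∈ bag z') :
    ∃ w : ι, w ∈ p.support ∧ w ∈ p'.support ∧ v ∈ bag w := by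
  classical
  obtain ⟨W0⟩ := (hconn v).preconnected ⟨z, hvz⟩ ⟨z', hvz'⟩
  let f : T.induce {i | v ∈ bag i} →g T := ⟨Subtype.val, fun h => h⟩
  have hW : ∀ w ∈ (W0.map f).support, v ∈ bag w := by
    intro w hw
    rw [SimpleGraph.Walk.support_map, List.mem_map] at hw
    obtain ⟨x, _, rfl⟩ := hw
    exact x.2
  obtain ⟨w, h1, h2, h3⟩ := meet_lemma htree.IsAcyclic (W0.map f)
    (p.takeUntil z hz) (p'.takeUntil z' hz') (hp.takeUntil hz) (hp'.takeUntil hz')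
  exact ⟨w, SimpleGraph.Walk.support_takeUntil_subset _ _ h1,
    SimpleGraph.Walk.support_takeUntil_subset _ _ h2, hW w h3⟩
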